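/- Let 𝔞 be a proper Lie subalgebra of the free 2-step nilpotent Lie algebra 𝔤 = 𝕂^r ⊕ Λ²𝕂^r. If the center of 𝔞 is not contained in Λ²𝕂^r, then 𝔞 is abelian and dim(𝔞 / (𝔞 ∩ Λ²𝕂^r)) = 1. -/

import Mathlib

/-- The free 2-step nilpotent Lie algebra of rank `r`: `𝕂^r ⊕ Λ²𝕂^r`, where
`Λ²𝕂^r` is modeled by coordinates indexed by pairs `i < j`. -/
abbrev FreeNilp2 (K : Type) [Field K] (r : ℕ) : Type :=
  (Fin r → K) × ({p : Fin r × Fin r // p.1 < p.2} → K)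

/-- The wedge `x ∧ y` in coordinates. -/
def wedge {K : Type} [Field K] {r : ℕ} (x y : Fin r → K) :
    {p : Fin r × Fin r // p.1 < p.2} → K :=
  fun p => x p.1.1 * y p.1.2 - x p.1.2 * y p.1.1

noncomputable instance (K : Type) [Field K] (r : ℕ) : LieRing (FreeNilp2 K r) where
  bracket a b := (0, wedge a.1 b.1)
  add_lie a b c := by
    refine Prod.ext (by simp) (funext fun p => ?_)
    show wedge (a.1 + b.1) c.1 p = wedge a.1 c.1 p + wedge b.1 c.1 p
    simp [wedge]; ring
  lie_add a b c := by
    refine Prod.ext (by simp) (funext fun p => ?_)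
    show wedge a.1 (b.1 + c.1) p = wedge a.1 b.1 p + wedge a.1 c.1 p
    simp [wedge]; ring
  lie_self a := by
    refine Prod.ext (by simp) (funext fun p => ?_)
    show wedge a.1 a.1 p = 0
    simp [wedge]; ring
  leibniz_lie a b c := by
    refine Prod.ext (by simp) (funext fun p => ?_)
    show wedge a.1 (0 : Fin r → K) p =
      wedge (0 : Fin r → K) c.1 p + wedge b.1 (0 : Fin r → K) p
    simp [wedge]

noncomputable instance (K : Type) [Field K] (r : ℕ) : LieAlgebra K (FreeNilp2 K r) where
  lie_smul t a b := by
    refine Prod.ext (by show (0 : Fin r → K) = t • (0 : Fin r → K); simp) (funext fun p => ?_)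
    show wedge a.1 (t • b.1) p = t * wedge a.1 b.1 p
    simp [wedge]; ring

/-- If `𝔞` is a proper Lie subalgebra of the free 2-step nilpotent Lie algebra
`𝔤 = 𝕂^r ⊕ Λ²𝕂^r` whose center is not contained in `Λ²𝕂^r`, then `𝔞` is
abelian and `dim(𝔞 / (𝔞 ∩ Λ²𝕂^r)) = 1` (i.e. the projection of `𝔞` to `𝕂^r`
is 1-dimensional). -/
theorem proper_subalgebra_center (K : Type) [Field K] [CharZero K] (r : ℕ)
    (𝔞 : LieSubalgebra K (FreeNilp2 K r)) (hproper : 𝔞 ≠ ⊤)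
    (hcen : ∃ a ∈ 𝔞, (∀ b ∈ 𝔞, ⁅a, b⁆ = 0) ∧ a.1 ≠ 0) :
    IsLieAbelian ↥𝔞 ∧
      Module.finrank K
        (Submodule.map
          (LinearMap.fst K (Fin r → K) ({p : Fin r × Fin r // p.1 < p.2} → K))
          𝔞.toSubmodule) = 1 := by
  obtain ⟨a, ha, hcen, hane⟩ := hcen
  -- from centrality: cross products vanish
  have key : ∀ b ∈ 𝔞, ∀ i j : Fin r, a.1 i * b.1 j = a.1 j * b.1 i := by
    intro b hb i j
    have hw : wedge a.1 b.1 = 0 := congrArg Prod.snd (hcen b hb)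
    rcases lt_trichotomy i j with h | h | h
    · have := congrFun hw ⟨(i, j), h⟩
      simp only [wedge, Pi.zero_apply] at this
      linear_combination this
    · subst h; ring
    · have := congrFun hw ⟨(j, i), h⟩
      simp only [wedge, Pi.zero_apply] at this
      linear_combination -this
  obtain ⟨i, hi⟩ : ∃ i, a.1 i ≠ 0 := Function.ne_iff.mp hane
  -- every element of 𝔞 has first component a multiple of a.1
  have hmul : ∀ b ∈ 𝔞, b.1 = (b.1 i / a.1 i) • a.1 := by
    intro b hb
    funext j
    have := key b hb i j
    rw [Pi.smul_apply, smul_eq_mul, div_mul_eq_mul_div, eq_div_iff hi]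
    linear_combination this
  constructor
  · constructor
    intro x y
    have hx := hmul x.1 x.2
    have hy := hmul y.1 y.2
    apply Subtype.ext
    show ⁅(x : FreeNilp2 K r), (y : FreeNilp2 K r)⁆ = 0
    refine Prod.ext rfl (funext fun p => ?_)
    show wedge (x : FreeNilp2 K r).1 (y : FreeNilp2 K r).1 p = 0
    rw [hx, hy]
    simp [wedge]; ring
  · have heq : Submodule.map
        (LinearMap.fst K (Fin r → K) ({p : Fin r × Fin r // p.1 < p.2} → K))
        𝔞.toSubmodule = Submodule.span K {a.1} := by
      apply le_antisymm
      · rintro x ⟨b, hb, rfl⟩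
        show b.1 ∈ _
        rw [hmul b hb]
        exact Submodule.smul_mem _ _ (Submodule.mem_span_singleton_self _)
      · rw [Submodule.span_singleton_le_iff_mem]
        exact ⟨a, ha, rfl⟩
    rw [heq]
    exact finrank_span_singleton hane
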